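/- Fix n ≥ 2 and 1 ≤ k ≤ n, and let (1^k) denote the single-column partition. For every permutation w ∈ S_n, the K-Demazure crystal SVT^n_{(i_1,…,i_ℓ)}((1^k)) is the same for all reduced words (i_1,…,i_ℓ) of w. -/

import Mathlib

open scoped Classical

noncomputable section

namespace SVTCrystal

/-- A filling assigns to each (row, column) position (0-indexed) a finite set of entries. -/
abbrev Filling : Type := ℕ → ℕ → Finset ℕ

/-- `lam` is a partition shape with at most `n` rows. -/
def IsPartitionShape (n : ℕ) (lam : ℕ → ℕ) : Prop :=
  (∀ r, lam (r + 1) ≤ lam r) ∧ (∀ r, n ≤ r → lam r = 0)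

/-- Semistandard set-valued tableau of shape `lam` with entries in `{1,…,n}`. -/
structure IsSVT (n : ℕ) (lam : ℕ → ℕ) (t : Filling) : Prop where
  boxNonempty : ∀ r c, c < lam r → (t r c).Nonempty
  emptyOutside : ∀ r c, ¬ c < lam r → t r c = ∅
  entryBounds : ∀ r c a, a ∈ t r c → 1 ≤ a ∧ a ≤ n
  rowWeak : ∀ r c a b, a ∈ t r c → b ∈ t r (c + 1) → a ≤ b
  colStrict : ∀ r c a b, a ∈ t r c → b ∈ t (r + 1) c → a < b

/-- Semistandard Young tableau: a set-valued tableau all of whose boxes are singletons. -/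
def IsSSYT (n : ℕ) (lam : ℕ → ℕ) (t : Filling) : Prop :=
  IsSVT n lam t ∧ ∀ r c, c < lam r → (t r c).card = 1

/-- The weight: `wt n lam t j` is the number of boxes of `t` containing the entry `j`. -/
def wt (n : ℕ) (lam : ℕ → ℕ) (t : Filling) (j : ℕ) : ℕ :=
  ((Finset.range n ×ˢ Finset.range (lam 0)).filter (fun p => j ∈ t p.1 p.2)).card

/-- The excess: total number of extra entries. -/
def excess (n : ℕ) (lam : ℕ → ℕ) (t : Filling) : ℕ :=
  ∑ p ∈ Finset.range n ×ˢ Finset.range (lam 0), ((t p.1 p.2).card - 1)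

/-- Column `c` contains the entry `a`. -/
def colHas (n : ℕ) (t : Filling) (a c : ℕ) : Prop := ∃ r, r < n ∧ a ∈ t r c

/-- The sign of column `c` for the `i`-signature rule: `+` (true) if the column contains `i`
but not `i+1`, `-` (false) if it contains `i+1` but not `i`. -/
def colSign (n : ℕ) (t : Filling) (i c : ℕ) : Option Bool :=
  if colHas n t i c ∧ ¬ colHas n t (i + 1) c then some true
  else if colHas n t (i + 1) c ∧ ¬ colHas n t i c then some false
  else none

/-- The number of `-` (false) signs left uncanceled after scanning the word left-to-right,
iteratively canceling `-+` pairs. -/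
def mctr (w : List Bool) : ℕ := w.foldl (fun cnt b => if b then cnt - 1 else cnt + 1) 0

/-- The number of `+` (true) signs left uncanceled, scanning right-to-left. -/
def pctr (w : List Bool) : ℕ := w.foldr (fun b cnt => if b then cnt + 1 else cnt - 1) 0

/-- The word of column signs of the columns before column `c`. -/
def colWordBefore (n : ℕ) (t : Filling) (i c : ℕ) : List Bool :=
  (List.range c).filterMap (colSign n t i)

/-- The word of column signs of the columns after column `c` (among columns `< ncols`). -/
def colWordAfter (n ncols : ℕ) (t : Filling) (i c : ℕ) : List Bool :=
  ((List.range ncols).drop (c + 1)).filterMap (colSign n t i)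

/-- Column `c` carries an uncanceled `+` for the `i`-signature rule. -/
def PlusCol (n ncols : ℕ) (t : Filling) (i c : ℕ) : Prop :=
  c < ncols ∧ colSign n t i c = some true ∧ mctr (colWordBefore n t i c) = 0

/-- Column `c` carries an uncanceled `-` for the `i`-signature rule. -/
def MinusCol (n ncols : ℕ) (t : Filling) (i c : ℕ) : Prop :=
  c < ncols ∧ colSign n t i c = some false ∧ pctr (colWordAfter n ncols t i c) = 0

/-- Column `c` is the rightmost uncanceled `+`. -/
def fBoxCol (n ncols : ℕ) (t : Filling) (i c : ℕ) : Prop :=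
  PlusCol n ncols t i c ∧ ∀ c', PlusCol n ncols t i c' → c' ≤ c

/-- Column `c` is the leftmost uncanceled `-`. -/
def eBoxCol (n ncols : ℕ) (t : Filling) (i c : ℕ) : Prop :=
  MinusCol n ncols t i c ∧ ∀ c', MinusCol n ncols t i c' → c ≤ c'

/-- Replace the content of the box in row `r`, column `c` by `A`. -/
def updateBox (t : Filling) (r c : ℕ) (A : Finset ℕ) : Filling :=
  fun r' c' => if r' = r ∧ c' = c then A else t r' c'

/-- The set-valued crystal operator `f_i` (signature rule). -/
def fRaw (n : ℕ) (lam : ℕ → ℕ) (i : ℕ) (t : Filling) : Option Filling :=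
  if h : ∃ c, fBoxCol n (lam 0) t i c then
    let c := Classical.choose h
    if hr : ∃ r, r < n ∧ i ∈ t r c then
      let r := Classical.choose hr
      if i ∈ t r (c + 1) then
        some (updateBox (updateBox t r (c + 1) ((t r (c + 1)).erase i)) r c
          (insert (i + 1) (t r c)))
      else some (updateBox t r c (insert (i + 1) ((t r c).erase i)))
    else none
  else none

/-- The set-valued crystal operator `e_i` (signature rule). -/
def eRaw (n : ℕ) (lam : ℕ → ℕ) (i : ℕ) (t : Filling) : Option Filling :=
  if h : ∃ c, eBoxCol n (lam 0) t i c then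
    let c := Classical.choose h
    if hr : ∃ r, r < n ∧ (i + 1) ∈ t r c then
      let r := Classical.choose hr
      if 0 < c ∧ (i + 1) ∈ t r (c - 1) then
        some (updateBox (updateBox t r (c - 1) ((t r (c - 1)).erase (i + 1))) r c
          (insert i (t r c)))
      else some (updateBox t r c (insert i ((t r c).erase (i + 1))))
    else none
  else none

/-- Iterate a partially-defined operator. -/
def iterOpt (g : Filling → Option Filling) : ℕ → Filling → Option Filling
  | 0, t => some t
  | m + 1, t => (iterOpt g m t).bind g

/-- Highest weight (Yamanouchi) elements. -/
def IsYamanouchi (n : ℕ) (lam : ℕ → ℕ) (t : Filling) : Prop :=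
  ∀ i, 1 ≤ i → i < n → eRaw n lam i t = none

/-- Closure of `t0` under the crystal operators `e_i`, `f_i` for `1 ≤ i < n`. -/
inductive Reach (n : ℕ) (lam : ℕ → ℕ) (t0 : Filling) : Filling → Prop
  | base : Reach n lam t0 t0
  | stepF : ∀ {t t' : Filling} (i : ℕ), 1 ≤ i → i < n → Reach n lam t0 t →
      fRaw n lam i t = some t' → Reach n lam t0 t'
  | stepE : ∀ {t t' : Filling} (i : ℕ), 1 ≤ i → i < n → Reach n lam t0 t →
      eRaw n lam i t = some t' → Reach n lam t0 t'

/-- The one-row partition `(s)`. -/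
def rowShape (s : ℕ) : ℕ → ℕ := fun r => if r = 0 then s else 0

/-- The one-column partition `(1^k)`. -/
def colShape (k : ℕ) : ℕ → ℕ := fun r => if r < k then 1 else 0

/-- The hook partition `(s, 1^e)`. -/
def hookShape (s e : ℕ) : ℕ → ℕ := fun r => if r = 0 then s else if r ≤ e then 1 else 0

/-! ### K-theory crystal operators (for single rows and single columns) -/

/-- Some box of the tableau contains the entry `a`. -/
def containsEntry (n : ℕ) (lam : ℕ → ℕ) (t : Filling) (a : ℕ) : Prop :=
  ∃ r c, r < n ∧ c < lam r ∧ a ∈ t r c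

/-- `p` is the rightmost box of `t` containing `i`. -/
def KBoxF (n : ℕ) (lam : ℕ → ℕ) (t : Filling) (i : ℕ) (p : ℕ × ℕ) : Prop :=
  p.1 < n ∧ p.2 < lam p.1 ∧ i ∈ t p.1 p.2 ∧
    ∀ q : ℕ × ℕ, q.1 < n → q.2 < lam q.1 → i ∈ t q.1 q.2 → q.2 ≤ p.2

/-- The K-crystal operator `f_i^K`: if `i` occurs in `t` and `i+1` does not, add `i+1` to
the rightmost box containing `i`; otherwise `0`. -/
def fK (n : ℕ) (lam : ℕ → ℕ) (i : ℕ) (t : Filling) : Option Filling :=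
  if h : (∃ p : ℕ × ℕ, KBoxF n lam t i p) ∧ ¬ containsEntry n lam t (i + 1) then
    let p := Classical.choose h.1
    some (updateBox t p.1 p.2 (insert (i + 1) (t p.1 p.2)))
  else none

/-- The K-crystal operator `e_i^K`: delete `i+1` from the box containing both `i` and `i+1`,
if such a box exists; otherwise `0`. -/
def eK (n : ℕ) (lam : ℕ → ℕ) (i : ℕ) (t : Filling) : Option Filling :=
  if h : ∃ p : ℕ × ℕ, p.1 < n ∧ p.2 < lam p.1 ∧ i ∈ t p.1 p.2 ∧ (i + 1) ∈ t p.1 p.2 then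
    let p := Classical.choose h
    some (updateBox t p.1 p.2 ((t p.1 p.2).erase (i + 1)))
  else none

/-- `t'` is the result of applying `g` to `t` as many times as possible. -/
def MaxApply (g : Filling → Option Filling) (t t' : Filling) : Prop :=
  (∃ m, iterOpt g m t = some t') ∧ g t' = none

/-- One Demazure step: apply `e_i` as many times as possible, then `e_i^K` as many times
as possible (here `eKop i` is the `i`-th K-operator). -/
def DemStep (n : ℕ) (lam : ℕ → ℕ) (eKop : ℕ → Filling → Option Filling) (i : ℕ)
    (t t' : Filling) : Prop :=
  ∃ t1, MaxApply (eRaw n lam i) t t1 ∧ MaxApply (eKop i) t1 t'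

/-- `DemReach n lam eKop [i₁,…,iℓ] t u` holds when
`u = (e_{iℓ}^K)^max e_{iℓ}^max ⋯ (e_{i₁}^K)^max e_{i₁}^max t`. -/
def DemReach (n : ℕ) (lam : ℕ → ℕ) (eKop : ℕ → Filling → Option Filling) :
    List ℕ → Filling → Filling → Prop
  | [], t, u => t = u
  | i :: rest, t, u => ∃ t2, DemStep n lam eKop i t t2 ∧ DemReach n lam eKop rest t2 u

/-- The minimal highest weight tableau `u_λ`, whose row `r` boxes are all `{r+1}`. -/
def uTab (lam : ℕ → ℕ) : Filling := fun r c => if c < lam r then {r + 1} else ∅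

/-- The K-Demazure crystal associated with a word `[i₁,…,iℓ]`. -/
def KDem (n : ℕ) (lam : ℕ → ℕ) (eKop : ℕ → Filling → Option Filling) (word : List ℕ) :
    Set Filling :=
  {t | IsSVT n lam t ∧ DemReach n lam eKop word t (uTab lam)}

/-! ### Permutations and reduced words -/

/-- The permutation `s_{i₁} ⋯ s_{iℓ}` of a word `[i₁,…,iℓ]`, where `s_i` swaps `i`, `i+1`. -/
def wordPerm (word : List ℕ) : Equiv.Perm ℕ :=
  (word.map fun i => Equiv.swap i (i + 1)).prod

/-- `word` is a reduced word for `w` in the Coxeter generators `s_1, …, s_{n-1}`. -/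
def IsReducedWord (n : ℕ) (w : Equiv.Perm ℕ) (word : List ℕ) : Prop :=
  (∀ i ∈ word, 1 ≤ i ∧ i < n) ∧ wordPerm word = w ∧
    ∀ word' : List ℕ, (∀ i ∈ word', 1 ≤ i ∧ i < n) → wordPerm word' = w →
      word.length ≤ word'.length

/-- The Coxeter length of a permutation of `{1,…,n}`. -/
def permLength (n : ℕ) (σ : Equiv.Perm ℕ) : ℕ :=
  sInf {l | ∃ word : List ℕ, (∀ i ∈ word, 1 ≤ i ∧ i < n) ∧ wordPerm word = σ ∧
    word.length = l}

/-- The parabolic subgroup generated by `s_2, …, s_{n-1}`. -/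
def parabolic (n : ℕ) : Subgroup (Equiv.Perm ℕ) :=
  Subgroup.closure {σ | ∃ i, 2 ≤ i ∧ i < n ∧ σ = Equiv.swap i (i + 1)}

/-! ### Polynomials -/

/-- Polynomials in `x₁, x₂, …` over `ℤ[β]`; the variable `β` is `Polynomial.X`. -/
abbrev KPoly : Type := MvPolynomial ℕ (Polynomial ℤ)

/-- The scalar `β`. -/
def betaP : KPoly := MvPolynomial.C Polynomial.X

/-- The monomial `x^{wt(T)} = x₁^{wt₁} ⋯ xₙ^{wtₙ}`. -/
def xwt (n : ℕ) (lam : ℕ → ℕ) (t : Filling) : KPoly :=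
  ∏ j ∈ Finset.Icc 1 n, (MvPolynomial.X j : KPoly) ^ wt n lam t j

/-- The β-character `∑_{T ∈ S} β^{excess T} x^{wt T}` of a set of tableaux. -/
def charSet (n : ℕ) (lam : ℕ → ℕ) (S : Set Filling) : KPoly :=
  ∑ᶠ t ∈ S, betaP ^ excess n lam t * xwt n lam t

/-- The symmetric Grothendieck polynomial `𝔊_λ(x₁,…,xₙ; β)`. -/
def Groth (n : ℕ) (lam : ℕ → ℕ) : KPoly :=
  charSet n lam {t | IsSVT n lam t}

/-- The Schur polynomial `s_μ(x₁,…,xₙ)`. -/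
def SchurP (n : ℕ) (mu : ℕ → ℕ) : KPoly :=
  ∑ᶠ t ∈ {t : Filling | IsSSYT n mu t}, xwt n mu t

/-- The numerator defining the Demazure–Lascoux operator `ϖ_i`. -/
def DLnum (i : ℕ) (f : KPoly) : KPoly :=
  (MvPolynomial.X i + betaP * MvPolynomial.X i * MvPolynomial.X (i + 1)) * f -
    (MvPolynomial.X (i + 1) + betaP * MvPolynomial.X i * MvPolynomial.X (i + 1)) *
      (MvPolynomial.rename (Equiv.swap i (i + 1)) f)

/-- `DL` implements the Demazure–Lascoux operators `ϖ_i` for `1 ≤ i < n`: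
`(x_i - x_{i+1}) · ϖ_i f` equals the defining numerator. -/
def IsDLOp (n : ℕ) (DL : ℕ → KPoly → KPoly) : Prop :=
  ∀ i, 1 ≤ i → i < n → ∀ f : KPoly,
    (MvPolynomial.X i - MvPolynomial.X (i + 1)) * DL i f = DLnum i f

/-- `applyDL DL [i₁,…,iℓ] f = ϖ_{i₁} ϖ_{i₂} ⋯ ϖ_{iℓ} f`. -/
def applyDL (DL : ℕ → KPoly → KPoly) : List ℕ → KPoly → KPoly
  | [], f => f
  | i :: rest, f => DL i (applyDL DL rest f)

-- tableau basics, to be appended after defs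
section Tab

variable {n k : ℕ} {t : Filling}

lemma colShape_zero (hk1 : 1 ≤ k) : colShape k 0 = 1 := by simp [colShape]; omega

lemma box_empty_row (ht : IsSVT n (colShape k) t) {r : ℕ} (hr : k ≤ r) (c : ℕ) :
    t r c = ∅ := ht.emptyOutside r c (by simp [colShape, show ¬ r < k by omega])

lemma box_empty_col (ht : IsSVT n (colShape k) t) (r : ℕ) {c : ℕ} (hc : 1 ≤ c) :
    t r c = ∅ := by
  apply ht.emptyOutside
  simp only [colShape]
  split_ifs <;> omega

lemma box_nonempty (ht : IsSVT n (colShape k) t) {r : ℕ} (hr : r < k) :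
    (t r 0).Nonempty := ht.boxNonempty r 0 (by simp [colShape, hr])

lemma row_lt (ht : IsSVT n (colShape k) t) :
    ∀ {r r' a b : ℕ}, r < r' → a ∈ t r 0 → b ∈ t r' 0 → a < b := by
  intro r r' a b hrr ha hb
  induction r' generalizing b with
  | zero => omega
  | succ r'' ih =>
    by_cases hrk : r'' < k
    · rcases Nat.lt_or_ge r r'' with h | h
      · obtain ⟨c, hc⟩ := box_nonempty ht hrk
        exact lt_trans (ih h hc) (ht.colStrict r'' 0 c b hc hb)
      · have : r = r'' := by omega
        subst this
        exact ht.colStrict r 0 a b ha hb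
    · rw [box_empty_row ht (by omega) 0] at hb
      exact absurd hb (Finset.notMem_empty b)

lemma row_unique (ht : IsSVT n (colShape k) t) {r r' a : ℕ}
    (ha : a ∈ t r 0) (ha' : a ∈ t r' 0) : r = r' := by
  rcases lt_trichotomy r r' with h | h | h
  · exact absurd (row_lt ht h ha ha') (by omega)
  · exact h
  · exact absurd (row_lt ht h ha' ha) (by omega)

lemma row_ge (ht : IsSVT n (colShape k) t) :
    ∀ {r a : ℕ}, a ∈ t r 0 → r + 1 ≤ a := by
  intro r
  induction r with
  | zero => intro a ha
            by_cases hk : (0:ℕ) < k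
            · exact (ht.entryBounds 0 0 a ha).1
            · rw [box_empty_row ht (by omega) 0] at ha
              exact absurd ha (Finset.notMem_empty a)
  | succ m ih =>
    intro a ha
    by_cases hk : m < k
    · obtain ⟨c, hc⟩ := box_nonempty ht hk
      have := ht.colStrict m 0 c a hc ha
      have := ih hc
      omega
    · rw [box_empty_row ht (by omega) 0] at ha
      exact absurd ha (Finset.notMem_empty a)

lemma colHas_iff (ht : IsSVT n (colShape k) t) (hkn : k ≤ n) (a : ℕ) :
    colHas n t a 0 ↔ ∃ r, r < k ∧ a ∈ t r 0 := by
  constructor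
  · rintro ⟨r, hr, hmem⟩
    refine ⟨r, ?_, hmem⟩
    by_contra hc
    rw [box_empty_row ht (by omega) 0] at hmem
    exact absurd hmem (Finset.notMem_empty a)
  · rintro ⟨r, hr, hmem⟩
    exact ⟨r, by omega, hmem⟩

lemma updateBox_same (t : Filling) (r c : ℕ) (A : Finset ℕ) :
    updateBox t r c A r c = A := by simp [updateBox]

lemma updateBox_other (t : Filling) {r c r' c' : ℕ} (h : ¬(r' = r ∧ c' = c))
    (A : Finset ℕ) : updateBox t r c A r' c' = t r' c' := by simp [updateBox, h]

/-- replacing a box by a nonempty set with the same "span" constraints -/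
lemma svt_update (ht : IsSVT n (colShape k) t) {r₀ : ℕ} (hr₀ : r₀ < k)
    {B : Finset ℕ} (hne : B.Nonempty)
    (hbd : ∀ x ∈ B, 1 ≤ x ∧ x ≤ n)
    (hlo : ∀ x ∈ B, ∀ r a, r < r₀ → a ∈ t r 0 → a < x)
    (hhi : ∀ x ∈ B, ∀ r a, r₀ < r → a ∈ t r 0 → x < a) :
    IsSVT n (colShape k) (updateBox t r₀ 0 B) := by
  constructor
  · intro r c hc
    by_cases h : r = r₀ ∧ c = 0
    · rw [h.1, h.2, updateBox_same]; exact hne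
    · rw [updateBox_other t h]; exact ht.boxNonempty r c hc
  · intro r c hc
    by_cases h : r = r₀ ∧ c = 0
    · exfalso
      rw [h.1] at hc
      simp [colShape, hr₀] at hc
      omega
    · rw [updateBox_other t h]; exact ht.emptyOutside r c hc
  · intro r c a ha
    by_cases h : r = r₀ ∧ c = 0
    · rw [h.1, h.2, updateBox_same] at ha; exact hbd a ha
    · rw [updateBox_other t h] at ha; exact ht.entryBounds r c a ha
  · intro r c a b ha hb
    have hb' : updateBox t r₀ 0 B r (c + 1) = t r (c + 1) :=
      updateBox_other t (by omega) B
    rw [hb'] at hb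
    rw [box_empty_col ht r (by omega)] at hb
    exact absurd hb (Finset.notMem_empty b)
  · intro r c a b ha hb
    by_cases hc0 : c = 0
    · subst hc0
      by_cases h1 : r = r₀
      · subst h1
        rw [updateBox_same] at ha
        rw [updateBox_other t (by omega)] at hb
        exact hhi a ha (r + 1) b (by omega) hb
      · rw [updateBox_other t (by simp [h1])] at ha
        by_cases h2 : r + 1 = r₀
        · rw [h2, updateBox_same] at hb
          exact hlo b hb r a (by omega) ha
        · rw [updateBox_other t (by simp [h2])] at hb
          exact ht.colStrict r 0 a b ha hb
    · rw [updateBox_other t (by omega)] at ha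
      rw [box_empty_col ht r (by omega)] at ha
      exact absurd ha (Finset.notMem_empty a)

end Tab
section Ops

variable {n k : ℕ} {t : Filling} {i : ℕ}

lemma pctr_nil : pctr [] = 0 := rfl

lemma colWordAfter_one (t : Filling) (i c : ℕ) : colWordAfter n 1 t i c = [] := by
  simp [colWordAfter, List.range_succ]

lemma colSign_false_iff (t : Filling) (i : ℕ) :
    colSign n t i 0 = some false ↔ colHas n t (i + 1) 0 ∧ ¬ colHas n t i 0 := by
  unfold colSign
  split_ifs with h1 h2 <;> simp_all

lemma minusCol_iff (hk1 : 1 ≤ k) (c : ℕ) :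
    MinusCol n (colShape k 0) t i c ↔
      c = 0 ∧ colHas n t (i + 1) 0 ∧ ¬ colHas n t i 0 := by
  unfold MinusCol
  rw [colShape_zero hk1]
  constructor
  · rintro ⟨hc, hsign, _⟩
    have hc0 : c = 0 := by omega
    subst hc0
    exact ⟨rfl, (colSign_false_iff t i).mp hsign⟩
  · rintro ⟨hc0, hsign⟩
    subst hc0
    exact ⟨by omega, (colSign_false_iff t i).mpr hsign, by rw [colWordAfter_one]; rfl⟩

lemma ex_eBoxCol_iff (hk1 : 1 ≤ k) :
    (∃ c, eBoxCol n (colShape k 0) t i c) ↔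
      colHas n t (i + 1) 0 ∧ ¬ colHas n t i 0 := by
  constructor
  · rintro ⟨c, hm, _⟩
    exact ((minusCol_iff hk1 c).mp hm).2
  · intro h
    exact ⟨0, (minusCol_iff hk1 0).mpr ⟨rfl, h⟩, fun c' _ => Nat.zero_le c'⟩

lemma eRaw_eq_none (hk1 : 1 ≤ k)
    (h : ¬ (colHas n t (i + 1) 0 ∧ ¬ colHas n t i 0)) :
    eRaw n (colShape k) i t = none := by
  unfold eRaw
  rw [dif_neg]
  rw [ex_eBoxCol_iff hk1]
  exact h

lemma eRaw_eq_some (ht : IsSVT n (colShape k) t) (hk1 : 1 ≤ k) (hkn : k ≤ n)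
    {r₀ : ℕ} (hr₀ : r₀ < k) (hmem : (i + 1) ∈ t r₀ 0)
    (hnoi : ¬ colHas n t i 0) :
    eRaw n (colShape k) i t
      = some (updateBox t r₀ 0 (insert i ((t r₀ 0).erase (i + 1)))) := by
  have hex : ∃ c, eBoxCol n (colShape k 0) t i c :=
    (ex_eBoxCol_iff hk1).mpr ⟨⟨r₀, by omega, hmem⟩, hnoi⟩
  unfold eRaw
  rw [dif_pos hex]
  have hc0 : Classical.choose hex = 0 :=
    ((minusCol_iff hk1 _).mp (Classical.choose_spec hex).1).1
  simp only [hc0]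
  have hr : ∃ r, r < n ∧ (i + 1) ∈ t r 0 := ⟨r₀, by omega, hmem⟩
  rw [dif_pos hr]
  have hre : Classical.choose hr = r₀ :=
    row_unique ht (Classical.choose_spec hr).2 hmem
  simp only [hre]
  rw [if_neg (by simp)]

lemma ex_eK_iff (ht : IsSVT n (colShape k) t) (hkn : k ≤ n) :
    (∃ p : ℕ × ℕ, p.1 < n ∧ p.2 < colShape k p.1 ∧ i ∈ t p.1 p.2 ∧
        (i + 1) ∈ t p.1 p.2) ↔
      ∃ r, r < k ∧ i ∈ t r 0 ∧ (i + 1) ∈ t r 0 := by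
  constructor
  · rintro ⟨⟨r, c⟩, h1, h2, h3, h4⟩
    simp only [colShape] at h2
    by_cases hrk : r < k
    · rw [if_pos hrk] at h2
      have hc0 : c = 0 := by omega
      subst hc0
      exact ⟨r, hrk, h3, h4⟩
    · rw [if_neg hrk] at h2; omega
  · rintro ⟨r, hr, h3, h4⟩
    exact ⟨(r, 0), by omega, by simp [colShape, hr], h3, h4⟩

lemma eK_eq_none (ht : IsSVT n (colShape k) t) (hkn : k ≤ n)
    (h : ¬ ∃ r, r < k ∧ i ∈ t r 0 ∧ (i + 1) ∈ t r 0) :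
    eK n (colShape k) i t = none := by
  unfold eK
  rw [dif_neg]
  rw [ex_eK_iff ht hkn]
  exact h

lemma eK_eq_some (ht : IsSVT n (colShape k) t) (hkn : k ≤ n)
    {r₀ : ℕ} (hr₀ : r₀ < k) (hi : i ∈ t r₀ 0) (hi1 : (i + 1) ∈ t r₀ 0) :
    eK n (colShape k) i t = some (updateBox t r₀ 0 ((t r₀ 0).erase (i + 1))) := by
  have hex : ∃ p : ℕ × ℕ, p.1 < n ∧ p.2 < colShape k p.1 ∧ i ∈ t p.1 p.2 ∧
      (i + 1) ∈ t p.1 p.2 := (ex_eK_iff ht hkn).mpr ⟨r₀, hr₀, hi, hi1⟩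
  unfold eK
  rw [dif_pos hex]
  obtain ⟨h1, h2, h3, h4⟩ := Classical.choose_spec hex
  have hc0 : (Classical.choose hex).2 = 0 := by
    change (Classical.choose hex).2 < (if (Classical.choose hex).1 < k then 1 else 0) at h2
    by_cases hrk : (Classical.choose hex).1 < k
    · rw [if_pos hrk] at h2; omega
    · rw [if_neg hrk] at h2; omega
  rw [hc0] at h4
  have hp : Classical.choose hex = (r₀, 0) :=
    Prod.ext (row_unique ht h4 hi1) hc0
  simp only [hp]

lemma iterOpt_of_none {g : Filling → Option Filling} {t : Filling}
    (h : g t = none) : ∀ m x, iterOpt g m t = some x → x = t := by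
  intro m
  induction m with
  | zero => intro x hx; simp [iterOpt] at hx; exact hx.symm
  | succ m ih =>
    intro x hx
    simp only [iterOpt] at hx
    rcases hy : iterOpt g m t with _ | y
    · rw [hy] at hx; simp at hx
    · rw [hy] at hx
      rw [Option.bind_some] at hx
      have := ih y hy
      subst this
      rw [h] at hx
      simp at hx

lemma iterOpt_of_one {g : Filling → Option Filling} {t s : Filling}
    (h : g t = some s) (h2 : g s = none) :
    ∀ m x, iterOpt g m t = some x → x = t ∨ x = s := by
  intro m
  induction m with
  | zero => intro x hx; simp [iterOpt] at hx; exact Or.inl hx.symm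
  | succ m ih =>
    intro x hx
    simp only [iterOpt] at hx
    rcases hy : iterOpt g m t with _ | y
    · rw [hy] at hx; simp at hx
    · rw [hy] at hx
      rw [Option.bind_some] at hx
      rcases ih y hy with h3 | h3 <;> subst h3
      · rw [h] at hx
        exact Or.inr (Option.some_injective _ hx).symm
      · rw [h2] at hx
        simp at hx

lemma maxApply_iff_none {g : Filling → Option Filling} {t t' : Filling}
    (h : g t = none) : MaxApply g t t' ↔ t' = t := by
  constructor
  · rintro ⟨⟨m, hm⟩, _⟩
    exact iterOpt_of_none h m t' hm
  · rintro rfl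
    exact ⟨⟨0, rfl⟩, h⟩

lemma maxApply_iff_one {g : Filling → Option Filling} {t s t' : Filling}
    (h : g t = some s) (h2 : g s = none) : MaxApply g t t' ↔ t' = s := by
  constructor
  · rintro ⟨⟨m, hm⟩, hnone⟩
    rcases iterOpt_of_one h h2 m t' hm with h3 | h3
    · subst h3; rw [h] at hnone; simp at hnone
    · exact h3
  · rintro rfl
    refine ⟨⟨1, ?_⟩, h2⟩
    simp [iterOpt, h]

end Ops
section Pinv

/-- The invariant: every entry `a` of row `r` has at most `r` elements of `A` below it. -/
def Pinv (k : ℕ) (A : Finset ℕ) (t : Filling) : Prop :=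
  ∀ r a, r < k → a ∈ t r 0 → (A.filter (· < a)).card ≤ r

variable {n k i : ℕ} {A : Finset ℕ} {t : Filling}

lemma filt_mono (A : Finset ℕ) {a b : ℕ} (h : a ≤ b) :
    (A.filter (· < a)).card ≤ (A.filter (· < b)).card := by
  apply Finset.card_le_card
  intro x hx
  rw [Finset.mem_filter] at hx ⊢
  exact ⟨hx.1, by omega⟩

lemma filt_succ (A : Finset ℕ) (a : ℕ) :
    (A.filter (· < a + 1)).card = (A.filter (· < a)).card + (if a ∈ A then 1 else 0) := by
  by_cases ha : a ∈ A
  · rw [if_pos ha]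
    have he : A.filter (· < a + 1) = insert a (A.filter (· < a)) := by
      ext x
      simp only [Finset.mem_filter, Finset.mem_insert]
      constructor
      · rintro ⟨h1, h2⟩
        by_cases hxa : x = a
        · exact Or.inl hxa
        · exact Or.inr ⟨h1, by omega⟩
      · rintro (rfl | ⟨h1, h2⟩)
        · exact ⟨ha, by omega⟩
        · exact ⟨h1, by omega⟩
    rw [he, Finset.card_insert_of_notMem (by simp [Finset.mem_filter])]
  · rw [if_neg ha, add_zero]
    congr 1
    ext x
    simp only [Finset.mem_filter]
    constructor
    · rintro ⟨h1, h2⟩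
      have : x ≠ a := fun he => ha (he ▸ h1)
      exact ⟨h1, by omega⟩
    · rintro ⟨h1, h2⟩
      exact ⟨h1, by omega⟩

lemma filt_card_le (A : Finset ℕ) (a : ℕ) : (A.filter (· < a)).card ≤ A.card :=
  Finset.card_le_card (Finset.filter_subset _ _)

lemma mem_image_swap {x : ℕ} :
    x ∈ A.image (Equiv.swap i (i + 1)) ↔ Equiv.swap i (i + 1) x ∈ A := by
  rw [Finset.mem_image]
  constructor
  · rintro ⟨y, hy, rfl⟩
    rwa [Equiv.swap_apply_self]
  · intro hx
    exact ⟨_, hx, Equiv.swap_apply_self _ _ _⟩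

lemma image_swap_of_both (hi : i ∈ A) (hi1 : i + 1 ∈ A) :
    A.image (Equiv.swap i (i + 1)) = A := by
  ext x
  rw [mem_image_swap, Equiv.swap_apply_def]
  split_ifs with h1 h2 <;> simp_all

lemma image_swap_of_none (hi : i ∉ A) (hi1 : i + 1 ∉ A) :
    A.image (Equiv.swap i (i + 1)) = A := by
  ext x
  rw [mem_image_swap, Equiv.swap_apply_def]
  split_ifs with h1 h2 <;> simp_all

lemma image_swap_of_mixed (hi : i ∉ A) (hi1 : i + 1 ∈ A) :
    A.image (Equiv.swap i (i + 1)) = insert i (A.erase (i + 1)) := by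
  ext x
  rw [mem_image_swap, Finset.mem_insert, Finset.mem_erase, Equiv.swap_apply_def]
  split_ifs with h1 h2 <;> simp_all

lemma filt_image_swap (hH : i ∈ A → (i + 1) ∈ A) (a : ℕ) :
    ((A.image (Equiv.swap i (i + 1))).filter (· < a)).card
      = (A.filter (· < a)).card
        + (if a = i + 1 ∧ (i + 1) ∈ A ∧ i ∉ A then 1 else 0) := by
  by_cases hi : i ∈ A
  · rw [image_swap_of_both hi (hH hi), if_neg (fun hc => hc.2.2 hi), add_zero]
  by_cases hi1 : (i + 1) ∈ A
  swap
  · rw [image_swap_of_none hi hi1, if_neg (fun hc => hi1 hc.2.1), add_zero]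
  · rw [image_swap_of_mixed hi hi1]
    rcases show a ≤ i ∨ a = i + 1 ∨ i + 2 ≤ a by omega with hr | hr | hr
    · rw [if_neg (fun hc => by omega), add_zero]
      congr 1
      ext x
      simp only [Finset.mem_filter, Finset.mem_insert, Finset.mem_erase]
      constructor
      · rintro ⟨(rfl | ⟨hne, hxA⟩), hx2⟩
        · omega
        · exact ⟨hxA, hx2⟩
      · rintro ⟨hxA, hx2⟩
        exact ⟨Or.inr ⟨by omega, hxA⟩, hx2⟩
    · subst hr
      rw [if_pos ⟨rfl, hi1, hi⟩]
      have he : (insert i (A.erase (i + 1))).filter (· < i + 1)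
          = insert i (A.filter (· < i + 1)) := by
        ext x
        simp only [Finset.mem_filter, Finset.mem_insert, Finset.mem_erase]
        constructor
        · rintro ⟨(rfl | ⟨hne, hxA⟩), hx2⟩
          · exact Or.inl rfl
          · exact Or.inr ⟨hxA, hx2⟩
        · rintro (rfl | ⟨hxA, hx2⟩)
          · exact ⟨Or.inl rfl, by omega⟩
          · exact ⟨Or.inr ⟨by omega, hxA⟩, hx2⟩
      rw [he, Finset.card_insert_of_notMem (by simp [Finset.mem_filter, hi])]
    · rw [if_neg (fun hc => by omega), add_zero]
      have he : (insert i (A.erase (i + 1))).filter (· < a)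
          = insert i ((A.filter (· < a)).erase (i + 1)) := by
        ext x
        simp only [Finset.mem_filter, Finset.mem_insert, Finset.mem_erase]
        constructor
        · rintro ⟨(rfl | ⟨hne, hxA⟩), hx2⟩
          · exact Or.inl rfl
          · exact Or.inr ⟨hne, hxA, hx2⟩
        · rintro (rfl | ⟨hne, hxA, hx2⟩)
          · exact ⟨Or.inl rfl, by omega⟩
          · exact ⟨Or.inr ⟨hne, hxA⟩, hx2⟩
      have hm : (i + 1) ∈ A.filter (· < a) := by
        rw [Finset.mem_filter]; exact ⟨hi1, by omega⟩
      rw [he, Finset.card_insert_of_notMem (by simp [Finset.mem_filter, hi]),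
        Finset.card_erase_of_mem hm]
      have : 1 ≤ (A.filter (· < a)).card := Finset.card_pos.mpr ⟨_, hm⟩
      omega

/-- forward transfer for the two "modifying" cases. -/
lemma pinv_forward {r₀ : ℕ} {D : Filling}
    (ht : IsSVT n (colShape k) t) (hkn : k ≤ n)
    (hH : i ∈ A → (i + 1) ∈ A) (hcard : A.card = k)
    (hr₀ : r₀ < k) (hmem : (i + 1) ∈ t r₀ 0)
    (hDi : i ∈ D r₀ 0)
    (hDother : ∀ r, r ≠ r₀ → D r 0 = t r 0)
    (hsubD : ∀ a, a ∈ t r₀ 0 → a ≠ i + 1 → a ∈ D r₀ 0)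
    (hP : Pinv k (A.image (Equiv.swap i (i + 1))) D) : Pinv k A t := by
  intro r a hr ha
  by_cases hai1 : a = i + 1
  · subst hai1
    have hrr : r = r₀ := row_unique ht ha hmem
    subst hrr
    have h0 := hP r i hr hDi
    rw [filt_image_swap hH i, if_neg (fun hc => by omega), add_zero] at h0
    rw [filt_succ A i]
    by_cases hiA : i ∈ A
    · rw [if_pos hiA]
      by_cases hceq : (A.filter (· < i)).card = r
      · exfalso
        have hi1A := hH hiA
        have e1 := filt_succ A (i + 1)
        rw [if_pos hi1A] at e1
        have e2 := filt_succ A i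
        rw [if_pos hiA] at e2
        have hklow : (A.filter (· < i + 1 + 1)).card ≤ k := hcard ▸ filt_card_le A (i + 1 + 1)
        obtain ⟨z, hz⟩ := box_nonempty ht (show r + 1 < k by omega)
        have hzgt : i + 1 < z := row_lt ht (show r < r + 1 by omega) hmem hz
        have hzD : z ∈ D (r + 1) 0 := by rw [hDother (r + 1) (by omega)]; exact hz
        have h3 := hP (r + 1) z (by omega) hzD
        rw [filt_image_swap hH z, if_neg (fun hc => by omega)] at h3
        have h4 := filt_mono A (show i + 1 + 1 ≤ z by omega)
        omega
      · omega
    · rw [if_neg hiA]; omega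
  · have haD : a ∈ D r 0 := by
      by_cases hrr : r = r₀
      · subst hrr; exact hsubD a ha hai1
      · rw [hDother r hrr]; exact ha
    have := hP r a hr haD
    rw [filt_image_swap hH a, if_neg (fun hc => hai1 hc.1)] at this
    omega

/-- backward transfer for the two "modifying" cases. -/
lemma pinv_backward {r₀ : ℕ} {D : Filling}
    (ht : IsSVT n (colShape k) t)
    (hH : i ∈ A → (i + 1) ∈ A)
    (hr₀ : r₀ < k) (hmem : (i + 1) ∈ t r₀ 0)
    (hDnoI1 : ∀ r a, r < k → a ∈ D r 0 → a ≠ i + 1)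
    (hDcases : ∀ r a, r < k → a ∈ D r 0 → a ∈ t r 0 ∨ (r = r₀ ∧ a = i))
    (hP : Pinv k A t) : Pinv k (A.image (Equiv.swap i (i + 1))) D := by
  intro r a hr ha
  rw [filt_image_swap hH a, if_neg (fun hc => hDnoI1 r a hr ha hc.1), add_zero]
  rcases hDcases r a hr ha with h | ⟨hr1, ha1⟩
  · exact hP r a hr h
  · rw [hr1, ha1]
    have h1 := hP r₀ (i + 1) hr₀ hmem
    have := filt_mono A (show i ≤ i + 1 by omega)
    omega

end Pinv
section Step

variable {n k i : ℕ} {A : Finset ℕ} {t : Filling}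

lemma step_equiv (hk1 : 1 ≤ k) (hkn : k ≤ n) (hi1 : 1 ≤ i) (hin : i < n)
    (ht : IsSVT n (colShape k) t)
    (hH : i ∈ A → (i + 1) ∈ A) (hcard : A.card = k) :
    ∃ D, IsSVT n (colShape k) D ∧
      (∀ t', DemStep n (colShape k) (eK n (colShape k)) i t t' ↔ t' = D) ∧
      (Pinv k (A.image (Equiv.swap i (i + 1))) D ↔ Pinv k A t) := by
  by_cases hch1 : colHas n t (i + 1) 0
  · obtain ⟨r₀, hr₀, hmem⟩ := (colHas_iff ht hkn _).mp hch1
    by_cases hbox : i ∈ t r₀ 0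
    · -- case B : i and i+1 in the same box; delete i+1
      set D := updateBox t r₀ 0 ((t r₀ 0).erase (i + 1)) with hD
      have hDsame : D r₀ 0 = (t r₀ 0).erase (i + 1) := updateBox_same t r₀ 0 _
      have hDother : ∀ r, r ≠ r₀ → D r 0 = t r 0 := fun r hrr =>
        updateBox_other t (fun hc => hrr hc.1) _
      have hDsvt : IsSVT n (colShape k) D := by
        apply svt_update ht hr₀
        · exact ⟨i, Finset.mem_erase.mpr ⟨by omega, hbox⟩⟩
        · intro x hx
          exact ht.entryBounds r₀ 0 x (Finset.mem_of_mem_erase hx)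
        · intro x hx r a hrlt ha
          exact row_lt ht hrlt ha (Finset.mem_of_mem_erase hx)
        · intro x hx r a hrlt ha
          exact row_lt ht hrlt (Finset.mem_of_mem_erase hx) ha
      have h1 : eRaw n (colShape k) i t = none :=
        eRaw_eq_none hk1 (fun hx => hx.2 ⟨r₀, by omega, hbox⟩)
      have h2 : eK n (colShape k) i t = some D := eK_eq_some ht hkn hr₀ hbox hmem
      have h3 : eK n (colShape k) i D = none := by
        apply eK_eq_none hDsvt hkn
        rintro ⟨r, hr, hdi, hdi1⟩
        by_cases hrr : r = r₀
        · subst hrr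
          rw [hDsame] at hdi1
          exact absurd rfl (Finset.mem_erase.mp hdi1).1
        · rw [hDother r hrr] at hdi1
          exact hrr (row_unique ht hdi1 hmem)
      refine ⟨D, hDsvt, ?_, ?_⟩
      · intro t'
        constructor
        · rintro ⟨t1, hm1, hm2⟩
          rw [maxApply_iff_none h1] at hm1
          subst hm1
          rwa [maxApply_iff_one h2 h3] at hm2
        · rintro rfl
          exact ⟨t, (maxApply_iff_none h1).mpr rfl, (maxApply_iff_one h2 h3).mpr rfl⟩
      · constructor
        · intro hP
          apply pinv_forward ht hkn hH hcard hr₀ hmem _ hDother _ hP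
          · rw [hDsame]; exact Finset.mem_erase.mpr ⟨by omega, hbox⟩
          · intro a ha hne
            rw [hDsame]; exact Finset.mem_erase.mpr ⟨hne, ha⟩
        · intro hP
          apply pinv_backward ht hH hr₀ hmem _ _ hP
          · intro r a hr ha
            by_cases hrr : r = r₀
            · subst hrr; rw [hDsame] at ha; exact (Finset.mem_erase.mp ha).1
            · rw [hDother r hrr] at ha
              exact fun he => hrr (row_unique ht (he ▸ ha) hmem)
          · intro r a hr ha
            left
            by_cases hrr : r = r₀
            · subst hrr; rw [hDsame] at ha; exact Finset.mem_of_mem_erase ha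
            · rwa [hDother r hrr] at ha
    · by_cases hcoli : colHas n t i 0
      · -- case C : i+1 present, i present in a different (higher) box; D = t
        obtain ⟨r₁, hr₁n, hmem1⟩ := hcoli
        have hr₁k : r₁ < k := by
          by_contra hc
          rw [box_empty_row ht (by omega) 0] at hmem1
          exact absurd hmem1 (Finset.notMem_empty _)
        have hr₁₀ : r₁ ≠ r₀ := fun he => hbox (he ▸ hmem1)
        have hlt : r₁ < r₀ := by
          rcases lt_or_gt_of_ne hr₁₀ with h | h
          · exact h
          · exact absurd (row_lt ht h hmem hmem1) (by omega)
        have h1 : eRaw n (colShape k) i t = none :=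
          eRaw_eq_none hk1 (fun hx => hx.2 ⟨r₁, by omega, hmem1⟩)
        have h2 : eK n (colShape k) i t = none := by
          apply eK_eq_none ht hkn
          rintro ⟨r, hr, hdi, hdi1⟩
          have : r = r₀ := row_unique ht hdi1 hmem
          exact hbox (this ▸ hdi)
        refine ⟨t, ht, ?_, ?_⟩
        · intro t'
          constructor
          · rintro ⟨t1, hm1, hm2⟩
            rw [maxApply_iff_none h1] at hm1
            subst hm1
            rwa [maxApply_iff_none h2] at hm2
          · intro h'
            rw [h']
            exact ⟨t, (maxApply_iff_none h1).mpr rfl, (maxApply_iff_none h2).mpr rfl⟩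
        · constructor
          · intro hP r a hr ha
            have := hP r a hr ha
            rw [filt_image_swap hH a] at this
            split_ifs at this <;> omega
          · intro hP r a hr ha
            rw [filt_image_swap hH a]
            by_cases hsp : a = i + 1 ∧ (i + 1) ∈ A ∧ i ∉ A
            · rw [if_pos hsp]
              obtain ⟨ha1, hA1, hA0⟩ := hsp
              have hrr : r = r₀ := row_unique ht (ha1 ▸ ha) hmem
              have hci := hP r₁ i hr₁k hmem1
              have hsucc := filt_succ A i
              rw [if_neg hA0] at hsucc
              rw [ha1]
              omega
            · rw [if_neg hsp]
              have := hP r a hr ha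
              omega
      · -- case D : i+1 present, i absent; replace i+1 by i
        set D := updateBox t r₀ 0 (insert i ((t r₀ 0).erase (i + 1))) with hD
        have hDsame : D r₀ 0 = insert i ((t r₀ 0).erase (i + 1)) := updateBox_same t r₀ 0 _
        have hDother : ∀ r, r ≠ r₀ → D r 0 = t r 0 := fun r hrr =>
          updateBox_other t (fun hc => hrr hc.1) _
        have hnoI : ∀ r a, a ∈ t r 0 → a ≠ i := by
          intro r a ha he
          have hrk : r < k := by
            by_contra hc
            rw [box_empty_row ht (by omega) 0] at ha
            exact absurd ha (Finset.notMem_empty _)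
          exact hcoli ⟨r, by omega, he ▸ ha⟩
        have hDsvt : IsSVT n (colShape k) D := by
          apply svt_update ht hr₀
          · exact ⟨i, Finset.mem_insert_self i _⟩
          · intro x hx
            rcases Finset.mem_insert.mp hx with rfl | hx'
            · omega
            · exact ht.entryBounds r₀ 0 x (Finset.mem_of_mem_erase hx')
          · intro x hx r a hrlt ha
            rcases Finset.mem_insert.mp hx with rfl | hx'
            · have h5 := row_lt ht hrlt ha hmem
              have h6 := hnoI r a ha
              omega
            · exact row_lt ht hrlt ha (Finset.mem_of_mem_erase hx')
          · intro x hx r a hrlt ha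
            rcases Finset.mem_insert.mp hx with rfl | hx'
            · have h5 := row_lt ht hrlt hmem ha
              omega
            · exact row_lt ht hrlt (Finset.mem_of_mem_erase hx') ha
        have h1 : eRaw n (colShape k) i t = some D := eRaw_eq_some ht hk1 hkn hr₀ hmem hcoli
        have h2 : eRaw n (colShape k) i D = none := by
          apply eRaw_eq_none hk1
          rintro ⟨-, hx⟩
          exact hx ⟨r₀, by omega, by rw [hDsame]; exact Finset.mem_insert_self i _⟩
        have h3 : eK n (colShape k) i D = none := by
          apply eK_eq_none hDsvt hkn
          rintro ⟨r, hr, hdi, hdi1⟩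
          by_cases hrr : r = r₀
          · subst hrr
            rw [hDsame] at hdi1
            rcases Finset.mem_insert.mp hdi1 with h | h
            · omega
            · exact absurd rfl (Finset.mem_erase.mp h).1
          · rw [hDother r hrr] at hdi1
            exact hrr (row_unique ht hdi1 hmem)
        refine ⟨D, hDsvt, ?_, ?_⟩
        · intro t'
          constructor
          · rintro ⟨t1, hm1, hm2⟩
            rw [maxApply_iff_one h1 h2] at hm1
            subst hm1
            rwa [maxApply_iff_none h3] at hm2
          · rintro rfl
            exact ⟨D, (maxApply_iff_one h1 h2).mpr rfl, (maxApply_iff_none h3).mpr rfl⟩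
        · constructor
          · intro hP
            apply pinv_forward ht hkn hH hcard hr₀ hmem _ hDother _ hP
            · rw [hDsame]; exact Finset.mem_insert_self i _
            · intro a ha hne
              rw [hDsame]
              exact Finset.mem_insert.mpr (Or.inr (Finset.mem_erase.mpr ⟨hne, ha⟩))
          · intro hP
            apply pinv_backward ht hH hr₀ hmem _ _ hP
            · intro r a hr ha
              by_cases hrr : r = r₀
              · subst hrr
                rw [hDsame] at ha
                rcases Finset.mem_insert.mp ha with rfl | h
                · omega
                · exact (Finset.mem_erase.mp h).1
              · rw [hDother r hrr] at ha
                exact fun he => hrr (row_unique ht (he ▸ ha) hmem)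
            · intro r a hr ha
              by_cases hrr : r = r₀
              · subst hrr
                rw [hDsame] at ha
                rcases Finset.mem_insert.mp ha with rfl | h
                · exact Or.inr ⟨rfl, rfl⟩
                · exact Or.inl (Finset.mem_of_mem_erase h)
              · rw [hDother r hrr] at ha
                exact Or.inl ha
  · -- case A : i+1 absent; D = t
    have h1 : eRaw n (colShape k) i t = none := eRaw_eq_none hk1 (fun hx => hch1 hx.1)
    have h2 : eK n (colShape k) i t = none := by
      apply eK_eq_none ht hkn
      rintro ⟨r, hr, hdi, hdi1⟩
      exact hch1 ⟨r, by omega, hdi1⟩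
    have hne : ∀ r a, r < k → a ∈ t r 0 → a ≠ i + 1 := fun r a hr ha he =>
      hch1 ⟨r, by omega, he ▸ ha⟩
    refine ⟨t, ht, ?_, ?_⟩
    · intro t'
      constructor
      · rintro ⟨t1, hm1, hm2⟩
        rw [maxApply_iff_none h1] at hm1
        subst hm1
        rwa [maxApply_iff_none h2] at hm2
      · intro h'
        rw [h']
        exact ⟨t, (maxApply_iff_none h1).mpr rfl, (maxApply_iff_none h2).mpr rfl⟩
    · constructor
      · intro hP r a hr ha
        have := hP r a hr ha
        rw [filt_image_swap hH a] at this
        split_ifs at this <;> omega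
      · intro hP r a hr ha
        rw [filt_image_swap hH a, if_neg (fun hc => hne r a hr ha hc.1), add_zero]
        exact hP r a hr ha

end Step



/-- number of inversions of `u` among `[1,n]`. -/
def invN (n : ℕ) (u : Equiv.Perm ℕ) : ℕ :=
  ((Finset.Icc 1 n ×ˢ Finset.Icc 1 n).filter
    (fun p => p.1 < p.2 ∧ u p.2 < u p.1)).card

/-- fixes everything outside `[1,n]`. -/
def HFix (n : ℕ) (u : Equiv.Perm ℕ) : Prop := ∀ x, x ∉ Finset.Icc 1 n → u x = x

lemma hfix_one (n : ℕ) : HFix n 1 := fun _ _ => rfl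

lemma hfix_swap {n i : ℕ} (h1 : 1 ≤ i) (h2 : i < n) : HFix n (Equiv.swap i (i + 1)) := by
  intro x hx
  simp only [Finset.mem_Icc, not_and_or, not_le] at hx
  apply Equiv.swap_apply_of_ne_of_ne <;> omega

lemma hfix_mul {n : ℕ} {u v : Equiv.Perm ℕ} (hu : HFix n u) (hv : HFix n v) :
    HFix n (u * v) := by
  intro x hx
  simp only [Equiv.Perm.mul_apply, hv x hx, hu x hx]

lemma hfix_wordPerm {n : ℕ} {word : List ℕ} (h : ∀ i ∈ word, 1 ≤ i ∧ i < n) :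
    HFix n (wordPerm word) := by
  induction word with
  | nil => exact hfix_one n
  | cons i rest ih =>
    have : wordPerm (i :: rest) = Equiv.swap i (i + 1) * wordPerm rest := by
      simp [wordPerm]
    rw [this]
    exact hfix_mul (hfix_swap (h i (by simp)).1 (h i (by simp)).2)
      (ih fun j hj => h j (by simp [hj]))

lemma hfix_maps {n : ℕ} {u : Equiv.Perm ℕ} (hu : HFix n u) {x : ℕ}
    (hx : x ∈ Finset.Icc 1 n) : u x ∈ Finset.Icc 1 n := by
  by_contra hc
  have := hu _ hc
  have : u (u x) = u x := this
  have hxx : u x = x := u.injective this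
  rw [hxx] at hc; exact hc hx

lemma hfix_inv {n : ℕ} {u : Equiv.Perm ℕ} (hu : HFix n u) : HFix n u⁻¹ := by
  intro x hx
  have := hu x hx
  conv_lhs => rw [← this]
  simp

lemma swap_lt {i a b : ℕ} (hab : a < b) (hne : ¬(a = i ∧ b = i + 1)) :
    Equiv.swap i (i + 1) a < Equiv.swap i (i + 1) b := by
  simp only [Equiv.swap_apply_def]
  split_ifs <;> omega

lemma swap_mem_Icc {n i : ℕ} (h1 : 1 ≤ i) (h2 : i < n) {x : ℕ}
    (hx : x ∈ Finset.Icc 1 n) : Equiv.swap i (i + 1) x ∈ Finset.Icc 1 n :=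
  hfix_maps (hfix_swap h1 h2) hx

/-- key sign lemma, right multiplication. -/
lemma invN_mul_swap (n : ℕ) (u : Equiv.Perm ℕ) {i : ℕ} (h1 : 1 ≤ i) (h2 : i < n) :
    invN n (u * Equiv.swap i (i + 1)) + (if u (i + 1) < u i then 1 else 0)
      = invN n u + (if u i < u (i + 1) then 1 else 0) := by
  classical
  set s := Equiv.swap i (i + 1) with hs
  set F : Equiv.Perm ℕ → Finset (ℕ × ℕ) := fun v =>
    ((Finset.Icc 1 n ×ˢ Finset.Icc 1 n).filter (fun p => p.1 < p.2 ∧ v p.2 < v p.1)) with hF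
  have hmemIcc : (i, i + 1) ∈ Finset.Icc 1 n ×ˢ Finset.Icc 1 n := by
    simp [Finset.mem_Icc]; omega
  have hGcard : ((F (u * s)).erase (i, i + 1)).card = ((F u).erase (i, i + 1)).card := by
    apply Finset.card_bij (fun p _ => (s p.1, s p.2))
    · rintro ⟨a, b⟩ hp
      simp only [Finset.mem_erase, hF, Finset.mem_filter, Finset.mem_product] at hp ⊢
      obtain ⟨hne, ⟨ha, hb⟩, hab, hinv⟩ := hp
      have hne' : ¬(a = i ∧ b = i + 1) := by
        intro ⟨e1, e2⟩; exact hne (by simp [e1, e2])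
      have hlt : s a < s b := swap_lt hab hne'
      refine ⟨?_, ⟨swap_mem_Icc h1 h2 ha, swap_mem_Icc h1 h2 hb⟩, hlt, ?_⟩
      · intro hc
        have h1' : s a = i := congrArg Prod.fst hc
        have h2' : s b = i + 1 := congrArg Prod.snd hc
        have : a = s i := by rw [← h1']; simp [hs]
        have hb' : b = s (i + 1) := by rw [← h2']; simp [hs]
        simp [hs, Equiv.swap_apply_left, Equiv.swap_apply_right] at this hb'
        omega
      · simpa [hs, Equiv.Perm.mul_apply, Equiv.swap_apply_self] using hinv
    · rintro ⟨a, b⟩ ha ⟨c, d⟩ hc h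
      have h1' : s a = s c := congrArg Prod.fst h
      have h2' : s b = s d := congrArg Prod.snd h
      exact Prod.ext (s.injective h1') (s.injective h2')
    · rintro ⟨a, b⟩ hp
      refine ⟨(s a, s b), ?_, ?_⟩
      · simp only [Finset.mem_erase, hF, Finset.mem_filter, Finset.mem_product] at hp ⊢
        obtain ⟨hne, ⟨ha, hb⟩, hab, hinv⟩ := hp
        have hne' : ¬(a = i ∧ b = i + 1) := by
          intro ⟨e1, e2⟩; exact hne (by simp [e1, e2])
        have hlt : s a < s b := swap_lt hab hne'
        refine ⟨?_, ⟨swap_mem_Icc h1 h2 ha, swap_mem_Icc h1 h2 hb⟩, hlt, ?_⟩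
        · intro hc
          have h1' : s a = i := congrArg Prod.fst hc
          have h2' : s b = i + 1 := congrArg Prod.snd hc
          have ha' : a = s i := by rw [← h1']; simp [hs]
          have hb' : b = s (i + 1) := by rw [← h2']; simp [hs]
          simp [hs, Equiv.swap_apply_left, Equiv.swap_apply_right] at ha' hb'
          omega
        · simpa [hs, Equiv.Perm.mul_apply, Equiv.swap_apply_self] using hinv
      · simp [hs, Equiv.swap_apply_self]
  have hmem1 : (i, i + 1) ∈ F (u * s) ↔ u i < u (i + 1) := by
    simp only [hF, Finset.mem_filter]
    simp [hF, hmemIcc, hs, Equiv.Perm.mul_apply, Equiv.swap_apply_left,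
      Equiv.swap_apply_right]
  have hmem2 : (i, i + 1) ∈ F u ↔ u (i + 1) < u i := by
    simp [hF, hmemIcc]
  have hc1 : (F (u * s)).card = ((F (u * s)).erase (i, i + 1)).card
      + (if u i < u (i + 1) then 1 else 0) := by
    by_cases hin : (i, i + 1) ∈ F (u * s)
    · rw [if_pos (hmem1.mp hin), Finset.card_erase_of_mem hin]
      have : 1 ≤ (F (u * s)).card := Finset.card_pos.mpr ⟨_, hin⟩
      omega
    · rw [if_neg (fun hlt => hin (hmem1.mpr hlt)), Finset.erase_eq_of_notMem hin]
      simp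
  have hc2 : (F u).card = ((F u).erase (i, i + 1)).card
      + (if u (i + 1) < u i then 1 else 0) := by
    by_cases hin : (i, i + 1) ∈ F u
    · rw [if_pos (hmem2.mp hin), Finset.card_erase_of_mem hin]
      have : 1 ≤ (F u).card := Finset.card_pos.mpr ⟨_, hin⟩
      omega
    · rw [if_neg (fun hlt => hin (hmem2.mpr hlt)), Finset.erase_eq_of_notMem hin]
      simp
  show (F (u * s)).card + _ = (F u).card + _
  omega

lemma invN_one (n : ℕ) : invN n 1 = 0 := by
  simp only [invN]
  rw [Finset.card_eq_zero, Finset.filter_eq_empty_iff]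
  rintro ⟨a, b⟩ _
  simp only [Equiv.Perm.one_apply]
  omega

lemma wordPerm_nil : wordPerm [] = 1 := rfl

lemma wordPerm_cons (i : ℕ) (rest : List ℕ) :
    wordPerm (i :: rest) = Equiv.swap i (i + 1) * wordPerm rest := by
  simp [wordPerm]

lemma wordPerm_append_singleton (word : List ℕ) (j : ℕ) :
    wordPerm (word ++ [j]) = wordPerm word * Equiv.swap j (j + 1) := by
  simp [wordPerm]

lemma invN_wordPerm_le (n : ℕ) (word : List ℕ) (h : ∀ i ∈ word, 1 ≤ i ∧ i < n) :
    invN n (wordPerm word) ≤ word.length := by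
  induction word using List.reverseRecOn with
  | nil => simp [wordPerm_nil, invN_one]
  | append_singleton word j ih =>
    rw [wordPerm_append_singleton]
    have hj := h j (by simp)
    have key := invN_mul_swap n (wordPerm word) hj.1 hj.2
    have := ih (fun i hi => h i (by simp [hi]))
    simp only [List.length_append, List.length_singleton]
    split_ifs at key <;> omega

lemma invN_eq_zero_iff {n : ℕ} {u : Equiv.Perm ℕ} (hu : HFix n u) :
    invN n u = 0 → u = 1 := by
  intro h0
  have hnoinv : ∀ a b, a ∈ Finset.Icc 1 n → b ∈ Finset.Icc 1 n → a < b → u a < u b := by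
    intro a b ha hb hab
    have hempty : ((Finset.Icc 1 n ×ˢ Finset.Icc 1 n).filter
        (fun p : ℕ × ℕ => p.1 < p.2 ∧ u p.2 < u p.1)) = ∅ := Finset.card_eq_zero.mp h0
    have hnot : ¬ (a < b ∧ u b < u a) := by
      intro hcon
      have hm : (a, b) ∈ ((Finset.Icc 1 n ×ˢ Finset.Icc 1 n).filter
          (fun p : ℕ × ℕ => p.1 < p.2 ∧ u p.2 < u p.1)) :=
        Finset.mem_filter.mpr ⟨Finset.mem_product.mpr ⟨ha, hb⟩, hcon⟩
      rw [hempty] at hm; exact absurd hm (Finset.notMem_empty _)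
    have hne : u a ≠ u b := fun he => (by omega : a ≠ b) (u.injective he)
    omega
  -- strictly monotone self-maps of Icc are ≥ id
  have hge : ∀ (v : Equiv.Perm ℕ), HFix n v →
      (∀ a b, a ∈ Finset.Icc 1 n → b ∈ Finset.Icc 1 n → a < b → v a < v b) →
      ∀ a, a ∈ Finset.Icc 1 n → a ≤ v a := by
    intro v hv hmono a
    induction a with
    | zero => intro ha; simp at ha
    | succ m ih =>
      intro ha
      simp only [Finset.mem_Icc] at ha
      by_cases hm : m = 0
      · subst hm
        have := hfix_maps hv (show 1 ∈ Finset.Icc 1 n by simp [Finset.mem_Icc]; omega)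
        simp only [Finset.mem_Icc] at this
        simpa using this.1
      · have hm1 : m ∈ Finset.Icc 1 n := by simp [Finset.mem_Icc]; omega
        have h1 := ih (by simp [Finset.mem_Icc]; omega)
        have h2 := hmono m (m + 1) hm1 (by simp [Finset.mem_Icc]; omega) (by omega)
        omega
  have hmono_inv : ∀ a b, a ∈ Finset.Icc 1 n → b ∈ Finset.Icc 1 n → a < b →
      u⁻¹ a < u⁻¹ b := by
    intro a b ha hb hab
    have hia := hfix_maps (hfix_inv hu) ha
    have hib := hfix_maps (hfix_inv hu) hb
    have hne : u⁻¹ a ≠ u⁻¹ b := fun he => (by omega : a ≠ b) (u⁻¹.injective he)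
    rcases lt_or_gt_of_ne hne with h | h
    · exact h
    · have := hnoinv _ _ hib hia h
      simp only [Equiv.Perm.coe_inv, Equiv.apply_symm_apply] at this
      omega
  have h1 := hge u hu hnoinv
  have h2 := hge u⁻¹ (hfix_inv hu) hmono_inv
  apply Equiv.ext
  intro x
  by_cases hx : x ∈ Finset.Icc 1 n
  · have ha := h1 x hx
    have hb := h2 (u x) (hfix_maps hu hx)
    simp only [Equiv.Perm.coe_inv, Equiv.symm_apply_apply] at hb
    simp only [Equiv.Perm.one_apply]
    omega
  · simp [hu x hx]

lemma exists_word_of_invN (n : ℕ) : ∀ (m : ℕ) (u : Equiv.Perm ℕ), HFix n u →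
    invN n u = m →
    ∃ word : List ℕ, (∀ i ∈ word, 1 ≤ i ∧ i < n) ∧ wordPerm word = u ∧
      word.length = m := by
  intro m
  induction m with
  | zero =>
    intro u hu h0
    refine ⟨[], by simp, ?_, rfl⟩
    rw [wordPerm_nil, invN_eq_zero_iff hu h0]
  | succ m ih =>
    intro u hu hm
    -- find a descent
    have hdesc : ∃ j, 1 ≤ j ∧ j < n ∧ u (j + 1) < u j := by
      by_contra hc
      push_neg at hc
      have hmono : ∀ a b, a ∈ Finset.Icc 1 n → b ∈ Finset.Icc 1 n → a < b →
          u a < u b := by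
        intro a b ha hb hab
        simp only [Finset.mem_Icc] at ha hb
        clear hm
        induction b with
        | zero => omega
        | succ c ihc =>
          have hc' : ¬ u (c + 1) < u c := by
            by_cases h1c : 1 ≤ c ∧ c < n
            · exact not_lt.mpr (hc c h1c.1 h1c.2)
            · omega
          have hne : u c ≠ u (c + 1) := fun he => by
            have := u.injective he; omega
          have hstep : u c < u (c + 1) := by omega
          by_cases hac : a = c
          · rw [hac]; exact hstep
          · have := ihc (by omega) (by omega)
            omega
      have h0 : invN n u = 0 := by
        rw [invN, Finset.card_eq_zero, Finset.filter_eq_empty_iff]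
        rintro ⟨a, b⟩ hab
        simp only [Finset.mem_product] at hab
        intro hlt
        exact absurd hlt.2 (not_lt.mpr (le_of_lt (hmono a b hab.1 hab.2 hlt.1)))
      omega
    obtain ⟨j, hj1, hj2, hdj⟩ := hdesc
    set v := u * Equiv.swap j (j + 1) with hv
    have hvfix : HFix n v := hfix_mul hu (hfix_swap hj1 hj2)
    have key := invN_mul_swap n u hj1 hj2
    rw [if_pos hdj, if_neg (by omega), ← hv] at key
    have hvm : invN n v = m := by omega
    obtain ⟨word, hw1, hw2, hw3⟩ := ih v hvfix hvm
    refine ⟨word ++ [j], ?_, ?_, by simp [hw3]⟩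
    · intro i hi
      rcases List.mem_append.mp hi with h | h
      · exact hw1 i h
      · simp at h; omega
    · rw [wordPerm_append_singleton, hw2, hv]
      rw [mul_assoc]
      simp



lemma invN_inv {n : ℕ} {u : Equiv.Perm ℕ} (hu : HFix n u) : invN n u⁻¹ = invN n u := by
  classical
  apply Finset.card_bij (fun (p : ℕ × ℕ) _ => (u⁻¹ p.2, u⁻¹ p.1))
  · rintro ⟨a, b⟩ hp
    simp only [Finset.mem_filter, Finset.mem_product] at hp ⊢
    obtain ⟨⟨ha, hb⟩, hab, hinv⟩ := hp
    refine ⟨⟨hfix_maps (hfix_inv hu) hb, hfix_maps (hfix_inv hu) ha⟩, hinv, ?_⟩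
    simp only [Equiv.Perm.coe_inv, Equiv.apply_symm_apply]
    exact hab
  · rintro ⟨a, b⟩ _ ⟨c, d⟩ _ h
    have h1 : u⁻¹ b = u⁻¹ d := congrArg Prod.fst h
    have h2 : u⁻¹ a = u⁻¹ c := congrArg Prod.snd h
    exact Prod.ext (u⁻¹.injective h2) (u⁻¹.injective h1)
  · rintro ⟨c, d⟩ hp
    simp only [Finset.mem_filter, Finset.mem_product] at hp
    obtain ⟨⟨hc, hd⟩, hcd, hinv⟩ := hp
    refine ⟨(u d, u c), ?_, ?_⟩
    · simp only [Finset.mem_filter, Finset.mem_product]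
      refine ⟨⟨hfix_maps hu hd, hfix_maps hu hc⟩, ?_, ?_⟩
      · simpa using hinv
      · simpa using hcd
    · simp

lemma reduced_tail {n : ℕ} {w : Equiv.Perm ℕ} {i : ℕ} {rest : List ℕ}
    (h : IsReducedWord n w (i :: rest)) :
    IsReducedWord n (Equiv.swap i (i + 1) * w) rest := by
  obtain ⟨hlet, hperm, hmin⟩ := h
  have hw : w = Equiv.swap i (i + 1) * wordPerm rest := by
    rw [← hperm, wordPerm_cons]
  refine ⟨fun j hj => hlet j (by simp [hj]), ?_, ?_⟩
  · rw [hw, ← mul_assoc, Equiv.swap_mul_self, one_mul]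
  · intro word' hlet' hperm'
    have hpw : wordPerm (i :: word') = w := by
      rw [wordPerm_cons, hperm', ← mul_assoc, Equiv.swap_mul_self, one_mul]
    have hgood : ∀ j ∈ (i :: word'), 1 ≤ j ∧ j < n := by
      intro j hj
      rcases List.mem_cons.mp hj with hx | hx
      · exact hx ▸ hlet i (by simp)
      · exact hlet' j hx
    have hml := hmin (i :: word') hgood hpw
    simpa using hml

lemma descent_of_reduced {n : ℕ} {w : Equiv.Perm ℕ} {i : ℕ} {rest : List ℕ}
    (h : IsReducedWord n w (i :: rest)) : w⁻¹ (i + 1) < w⁻¹ i := by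
  obtain ⟨hlet, hperm, hmin⟩ := h
  have hi := hlet i (by simp)
  have hfixw : HFix n w := hperm ▸ hfix_wordPerm hlet
  set w' := wordPerm rest with hw'
  have hfixw' : HFix n w' := hfix_wordPerm (fun j hj => hlet j (by simp [hj]))
  have hw : w = Equiv.swap i (i + 1) * w' := by rw [← hperm, wordPerm_cons]
  -- invN n w = rest.length + 1
  have hle : invN n w ≤ rest.length + 1 := by
    have := invN_wordPerm_le n (i :: rest) hlet
    simpa [hperm] using this
  have hge : rest.length + 1 ≤ invN n w := by
    obtain ⟨word'', hw1, hw2, hw3⟩ := exists_word_of_invN n (invN n w) w hfixw rfl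
    have := hmin word'' hw1 hw2
    simp only [List.length_cons] at this
    omega
  have hw'le : invN n w' ≤ rest.length :=
    invN_wordPerm_le n rest (fun j hj => hlet j (by simp [hj]))
  have hinvw : w⁻¹ = w'⁻¹ * Equiv.swap i (i + 1) := by
    rw [hw, mul_inv_rev, Equiv.swap_inv]
  have key := invN_mul_swap n w'⁻¹ hi.1 hi.2
  rw [← hinvw] at key
  rw [invN_inv hfixw] at key
  rw [invN_inv hfixw'] at key
  have hne : w'⁻¹ i ≠ w'⁻¹ (i + 1) := fun he => by
    have := w'⁻¹.injective he; omega
  have hlt : w'⁻¹ i < w'⁻¹ (i + 1) := by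
    rcases lt_or_gt_of_ne hne with hx | hx
    · exact hx
    · rw [if_pos hx, if_neg (by omega)] at key; omega
  have e1 : w⁻¹ (i + 1) = w'⁻¹ i := by
    rw [hinvw]
    simp [Equiv.swap_apply_right]
  have e2 : w⁻¹ i = w'⁻¹ (i + 1) := by
    rw [hinvw]
    simp [Equiv.swap_apply_left]
  omega

/-- the key parabolic fact: if `i :: rest` is reduced for `w` then
`i ∈ w(Icc 1 k) → i+1 ∈ w(Icc 1 k)`. -/
lemma H_of_reduced {n k : ℕ} (hkn : k ≤ n) {w : Equiv.Perm ℕ} {i : ℕ} {rest : List ℕ}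
    (h : IsReducedWord n w (i :: rest)) (hiA : i ∈ (Finset.Icc 1 k).image w) :
    (i + 1) ∈ (Finset.Icc 1 k).image w := by
  have hd := descent_of_reduced h
  have hi := h.1 i (by simp)
  have hfixw : HFix n w := h.2.1 ▸ hfix_wordPerm h.1
  obtain ⟨a, ha, hwa⟩ := Finset.mem_image.mp hiA
  have haeq : a = w⁻¹ i := by rw [← hwa]; simp
  simp only [Finset.mem_Icc] at ha
  set b := w⁻¹ (i + 1) with hb
  have hwb : w b = i + 1 := by rw [hb]; simp
  have hb1 : 1 ≤ b := by
    rcases Nat.eq_zero_or_pos b with h0 | h0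
    · exfalso
      have : w 0 = 0 := hfixw 0 (by simp)
      rw [h0] at hwb
      omega
    · exact h0
  have hbk : b ≤ k := by omega
  exact Finset.mem_image.mpr ⟨b, Finset.mem_Icc.mpr ⟨hb1, hbk⟩, hwb⟩

section Main

variable {n k : ℕ} {t : Filling}

lemma pinv_base (hk1 : 1 ≤ k) (hkn : k ≤ n) (ht : IsSVT n (colShape k) t) :
    Pinv k (Finset.Icc 1 k) t ↔ t = uTab (colShape k) := by
  constructor
  · intro hP
    funext r c
    by_cases hc : c = 0
    · subst hc
      by_cases hrk : r < k
      · have hbox := box_nonempty ht hrk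
        have hsub : t r 0 = {r + 1} := by
          apply Finset.eq_singleton_iff_nonempty_unique_mem.mpr
          refine ⟨hbox, ?_⟩
          intro a ha
          have hge := row_ge ht ha
          have hle := hP r a hrk ha
          by_contra hne
          have hgt : r + 2 ≤ a := by omega
          have hsubs : Finset.Icc 1 (r + 1) ⊆ (Finset.Icc 1 k).filter (· < a) := by
            intro x hx
            rw [Finset.mem_Icc] at hx
            rw [Finset.mem_filter, Finset.mem_Icc]
            exact ⟨⟨hx.1, by omega⟩, by omega⟩
          have hcc := Finset.card_le_card hsubs
          rw [Nat.card_Icc] at hcc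
          omega
        rw [hsub]
        simp [uTab, colShape, hrk]
      · rw [box_empty_row ht (by omega) 0]
        simp [uTab, colShape, hrk]
    · rw [box_empty_col ht r (by omega)]
      have hu : uTab (colShape k) r c = ∅ := by
        unfold uTab colShape
        rw [if_neg]
        split_ifs <;> omega
      rw [hu]
  · rintro rfl
    intro r a hrk ha
    unfold uTab at ha
    rw [if_pos (by simp [colShape, hrk])] at ha
    have haeq : a = r + 1 := Finset.mem_singleton.mp ha
    subst haeq
    have hsubs : (Finset.Icc 1 k).filter (· < r + 1) ⊆ Finset.Icc 1 r := by
      intro x hx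
      rw [Finset.mem_filter, Finset.mem_Icc] at hx
      rw [Finset.mem_Icc]
      omega
    have hcc := Finset.card_le_card hsubs
    rw [Nat.card_Icc] at hcc
    omega

lemma main_reach (hk1 : 1 ≤ k) (hkn : k ≤ n) :
    ∀ (word : List ℕ) (w : Equiv.Perm ℕ), IsReducedWord n w word →
      ∀ t, IsSVT n (colShape k) t →
        (DemReach n (colShape k) (eK n (colShape k)) word t (uTab (colShape k)) ↔
          Pinv k ((Finset.Icc 1 k).image w) t) := by
  intro word
  induction word with
  | nil =>
    intro w hred t ht
    have hw : w = 1 := by rw [← hred.2.1]; rfl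
    subst hw
    have himg : (Finset.Icc 1 k).image (1 : Equiv.Perm ℕ) = Finset.Icc 1 k := by simp
    rw [himg]
    have hreach : DemReach n (colShape k) (eK n (colShape k)) [] t (uTab (colShape k))
        ↔ t = uTab (colShape k) := Iff.rfl
    rw [hreach]
    exact (pinv_base hk1 hkn ht).symm
  | cons i rest ih =>
    intro w hred t ht
    have hi := hred.1 i (by simp)
    have hrest := reduced_tail hred
    have hH : i ∈ (Finset.Icc 1 k).image w → (i + 1) ∈ (Finset.Icc 1 k).image w :=
      H_of_reduced hkn hred
    have hcard : ((Finset.Icc 1 k).image w).card = k := by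
      rw [Finset.card_image_of_injective _ w.injective, Nat.card_Icc]
      omega
    obtain ⟨D, hDsvt, hstep, hPiff⟩ := step_equiv hk1 hkn hi.1 hi.2 ht hH hcard
    have himg : (Finset.Icc 1 k).image (Equiv.swap i (i + 1) * w)
        = ((Finset.Icc 1 k).image w).image (Equiv.swap i (i + 1)) := by
      rw [Finset.image_image, Equiv.Perm.coe_mul]
    have hreach : DemReach n (colShape k) (eK n (colShape k)) (i :: rest) t
          (uTab (colShape k))
        ↔ ∃ t2, DemStep n (colShape k) (eK n (colShape k)) i t t2 ∧
            DemReach n (colShape k) (eK n (colShape k)) rest t2 (uTab (colShape k)) :=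
      Iff.rfl
    rw [hreach]
    constructor
    · rintro ⟨t2, hs, hr⟩
      rw [hstep t2] at hs
      rw [hs] at hr
      have hPD := (ih _ hrest D hDsvt).mp hr
      rw [himg] at hPD
      exact hPiff.mp hPD
    · intro hP
      refine ⟨D, (hstep D).mpr rfl, ?_⟩
      apply (ih _ hrest D hDsvt).mpr
      rw [himg]
      exact hPiff.mpr hP

end Main

/-- for the one-column shape `(1ᵏ)`, the K-Demazure crystal of a reduced
word of `w ∈ Sₙ` does not depend on the choice of reduced word. -/
theorem kdem_column_well_defined (n k : ℕ) (hn : 2 ≤ n) (hk1 : 1 ≤ k) (hkn : k ≤ n)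
    (w : Equiv.Perm ℕ) (word word' : List ℕ)
    (h : IsReducedWord n w word) (h' : IsReducedWord n w word') :
    KDem n (colShape k) (eK n (colShape k)) word =
      KDem n (colShape k) (eK n (colShape k)) word' := by
  have h1 := main_reach hk1 hkn word w h
  have h2 := main_reach hk1 hkn word' w h'
  ext t
  simp only [KDem, Set.mem_setOf_eq]
  constructor
  · rintro ⟨ht, hr⟩
    exact ⟨ht, (h2 t ht).mpr ((h1 t ht).mp hr)⟩
  · rintro ⟨ht, hr⟩
    exact ⟨ht, (h1 t ht).mpr ((h2 t ht).mp hr)⟩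

end SVTCrystal

end
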